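/- Let τ = e^{−πi/9} and ω = e^{2πi/3}. The subgroup of GL(3,ℂ) generated by a = τ·diag(ω², −ω², ω) and b = τ·[[ω/2, −ω/2, ω²/√2],[−ω/2, ω/2, ω²/√2],[ω²/√2, ω²/√2, 0]] is isomorphic (as an abstract group) to the subgroup D(9,1,1;2,1,1) of GL(3,ℂ) generated by the three matrices E = [[0,1,0],[0,0,1],[1,0,0]], F = diag(e^{2πi/9}, e^{2πi/9}, e^{−4πi/9}), and G = [[e^{πi}, 0, 0],[0, 0, e^{πi}],[0, −e^{−2πi}, 0]] = [[−1,0,0],[0,0,−1],[0,−1,0]]. -/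

import Mathlib

open Matrix Complex

noncomputable section

/-- ω = e^{2πi/3}, a primitive third root of unity. -/
def ω : ℂ := Complex.exp (2 * Real.pi * Complex.I / 3)

/-- τ = e^{−πi/9}. -/
def τ : ℂ := Complex.exp (-(Real.pi * Complex.I) / 9)

/-- a = τ·diag(ω², −ω², ω). -/
def ma : Matrix (Fin 3) (Fin 3) ℂ := τ • diagonal ![ω ^ 2, -ω ^ 2, ω]

/-- b = τ·[[ω/2, −ω/2, ω²/√2],[−ω/2, ω/2, ω²/√2],[ω²/√2, ω²/√2, 0]]. -/
def mb : Matrix (Fin 3) (Fin 3) ℂ :=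
  τ • !![ω / 2, -ω / 2, ω ^ 2 / (Real.sqrt 2 : ℂ);
         -ω / 2, ω / 2, ω ^ 2 / (Real.sqrt 2 : ℂ);
         ω ^ 2 / (Real.sqrt 2 : ℂ), ω ^ 2 / (Real.sqrt 2 : ℂ), 0]

/-- The cyclic permutation matrix E. -/
def mE : Matrix (Fin 3) (Fin 3) ℂ := !![0, 1, 0; 0, 0, 1; 1, 0, 0]

/-- F(9,1,1) = diag(e^{2πi/9}, e^{2πi/9}, e^{−4πi/9}). -/
def mF : Matrix (Fin 3) (Fin 3) ℂ :=
  diagonal ![Complex.exp (2 * Real.pi * Complex.I / 9),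
             Complex.exp (2 * Real.pi * Complex.I / 9),
             Complex.exp (-(4 * Real.pi * Complex.I) / 9)]

/-- G(2,1,1) = [[−1,0,0],[0,0,−1],[0,−1,0]]. -/
def mG : Matrix (Fin 3) (Fin 3) ℂ := !![-1, 0, 0; 0, 0, -1; 0, -1, 0]

def e9 (m : ℤ) : ℂ := Complex.exp (m * (Real.pi * Complex.I / 9))

lemma e9_mul (m n : ℤ) : e9 m * e9 n = e9 (m + n) := by
  rw [e9, e9, e9, ← Complex.exp_add]; congr 1; push_cast; ring

lemma e9_per (m k : ℤ) : e9 (m + 18 * k) = e9 m := by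
  rw [e9, e9]
  have : ((m : ℂ) + 18 * k) * (Real.pi * Complex.I / 9)
      = m * (Real.pi * Complex.I / 9) + k * (2 * Real.pi * Complex.I) := by push_cast; ring
  rw [show ((m + 18 * k : ℤ) : ℂ) = (m : ℂ) + 18 * k by norm_num, this,
    Complex.exp_add, Complex.exp_int_mul_two_pi_mul_I, mul_one]

lemma e9_nine : e9 9 = -1 := by
  rw [e9, show ((9:ℤ):ℂ) * (Real.pi * Complex.I / 9) = Real.pi * Complex.I by push_cast; ring,
    Complex.exp_pi_mul_I]

lemma hω : ω = e9 6 := by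
  rw [ω, e9]; congr 1; push_cast; ring
lemma hτ : τ = e9 (-1) := by
  rw [τ, e9]; congr 1; push_cast; ring
lemma hf : Complex.exp (2 * Real.pi * Complex.I / 9) = e9 2 := by
  rw [e9]; congr 1; push_cast; ring
lemma hg : Complex.exp (-(4 * Real.pi * Complex.I) / 9) = e9 (-4) := by
  rw [e9]; congr 1; push_cast; ring
lemma hω2 : ω ^ 2 = e9 12 := by rw [hω, sq, e9_mul]; norm_num

-- sqrt 2 facts
lemma s2 : ((Real.sqrt 2 : ℝ) : ℂ) * ((Real.sqrt 2 : ℝ) : ℂ) = 2 := by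
  rw [← Complex.ofReal_mul, Real.mul_self_sqrt (by norm_num)]; norm_num
lemma s2a : ((Real.sqrt 2 : ℝ) : ℂ) * (((Real.sqrt 2 : ℝ) : ℂ) / 2) = 1 := by
  linear_combination s2 / 2
lemma s2b : (((Real.sqrt 2 : ℝ) : ℂ) / 2) * ((Real.sqrt 2 : ℝ) : ℂ) = 1 := by
  linear_combination s2 / 2
lemma s2ne : ((Real.sqrt 2 : ℝ) : ℂ) ≠ 0 := by
  simp [Real.sqrt_eq_zero']

-- explicit forms
def mA : Matrix (Fin 3) (Fin 3) ℂ := !![0, 0, e9 11; 0, e9 5, 0; e9 11, 0, 0]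
def mB : Matrix (Fin 3) (Fin 3) ℂ := !![0, e9 11, 0; e9 11, 0, 0; 0, 0, e9 5]
def dA : Matrix (Fin 3) (Fin 3) ℂ := !![e9 4, 0, 0; 0, e9 10, 0; 0, 0, e9 4]
def dB : Matrix (Fin 3) (Fin 3) ℂ := !![e9 4, 0, 0; 0, e9 4, 0; 0, 0, e9 10]
def mX : Matrix (Fin 3) (Fin 3) ℂ :=
  !![1, 1, 0; 0, 0, ((Real.sqrt 2 : ℝ) : ℂ); 1, -1, 0]
def mXi : Matrix (Fin 3) (Fin 3) ℂ :=
  !![1/2, 0, 1/2; 1/2, 0, -(1/2); 0, ((Real.sqrt 2 : ℝ) : ℂ)/2, 0]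

lemma hXXi : mX * mXi = 1 := by
  ext i j
  fin_cases i <;> fin_cases j <;>
    simp [mX, mXi, Matrix.mul_apply, Fin.sum_univ_three, Matrix.one_apply, s2a, s2b] <;>
    norm_num

lemma hXiX : mXi * mX = 1 := by
  ext i j
  fin_cases i <;> fin_cases j <;>
    simp [mX, mXi, Matrix.mul_apply, Fin.sum_univ_three, Matrix.one_apply, s2a, s2b] <;>
    norm_num


lemma e9_pow2 (m : ℤ) : e9 m ^ 2 = e9 (m + m) := by rw [sq, e9_mul]
lemma r20 : e9 20 = e9 2 := by rw [show (20:ℤ) = 2 + 18 * 1 by norm_num, e9_per]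
lemma r38 : e9 38 = e9 2 := by rw [show (38:ℤ) = 2 + 18 * 2 by norm_num, e9_per]
lemma r32 : e9 32 = e9 (-4) := by rw [show (32:ℤ) = -4 + 18 * 2 by norm_num, e9_per]
lemma r27 : e9 27 = -1 := by rw [show (27:ℤ) = 9 + 18 * 1 by norm_num, e9_per, e9_nine]
lemma r22 : e9 22 = e9 4 := by rw [show (22:ℤ) = 4 + 18 * 1 by norm_num, e9_per]
lemma r14 : e9 14 = e9 (-4) := by rw [show (14:ℤ) = -4 + 18 * 1 by norm_num, e9_per]
lemma rm8 : e9 (-8) = e9 10 := by rw [show (-8:ℤ) = 10 + 18 * (-1) by norm_num, e9_per]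
lemma e9_zero : e9 0 = 1 := by simp [e9]
lemma s2sq : ((Real.sqrt 2 : ℝ) : ℂ) ^ 2 = 2 := by rw [sq, s2]
lemma n11 : e9 11 = -e9 2 := by
  rw [show (11:ℤ) = 2 + 9 by norm_num, ← e9_mul, e9_nine]; ring
lemma n5 : e9 5 = -e9 (-4) := by
  rw [show (5:ℤ) = -4 + 9 by norm_num, ← e9_mul, e9_nine]; ring

lemma I0a : mE * mF * mG = mA := by
  ext i j
  fin_cases i <;> fin_cases j <;>
    simp [mE, mF, mG, mA, Matrix.mul_apply, Fin.sum_univ_three, Matrix.diagonal,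
      Matrix.vecHead, Matrix.vecTail, hf, hg, e9_mul, e9_pow2, n11, n5, rm8, e9_zero, s2sq, r20, r38, r32, r27,
      r22, r14] <;>
    ring_nf

lemma I0b : mF * mG * mE = mB := by
  ext i j
  fin_cases i <;> fin_cases j <;>
    simp [mE, mF, mG, mB, Matrix.mul_apply, Fin.sum_univ_three, Matrix.diagonal,
      Matrix.vecHead, Matrix.vecTail, hf, hg, e9_mul, e9_pow2, n11, n5, rm8, e9_zero, s2sq, r20, r38, r32, r27,
      r22, r14] <;>
    ring_nf

lemma I1 : mX * ma = mA * mX := by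
  ext i j
  fin_cases i <;> fin_cases j <;>
    simp [mX, ma, mA, Matrix.mul_apply, Fin.sum_univ_three, Matrix.diagonal,
      Matrix.vecHead, Matrix.vecTail, hτ, hω, e9_mul, e9_pow2, n11, n5, rm8, e9_zero, s2sq, r20, r38, r32, r27,
      r22, r14] <;>
    ring_nf <;> simp [e9_mul, e9_pow2, n11, n5, rm8, e9_zero, s2sq]

lemma I2 : mX * mb = mB * mX := by
  ext i j
  fin_cases i <;> fin_cases j <;>
    simp [mX, mb, mB, Matrix.mul_apply, Fin.sum_univ_three,
      Matrix.vecHead, Matrix.vecTail, hτ, hω, e9_mul, e9_pow2, n11, n5, rm8, e9_zero, s2sq] <;>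
    (try field_simp) <;> ring_nf <;> (try simp [e9_mul, e9_pow2, n11, n5, rm8, e9_zero, s2sq]) <;>
    (try linear_combination -(e9 2) * s2) <;> ring

lemma IdA : mA * mA = dA := by
  ext i j
  fin_cases i <;> fin_cases j <;>
    simp [mA, dA, Matrix.mul_apply, Fin.sum_univ_three, Matrix.vecHead, Matrix.vecTail,
      e9_mul, n11, n5, rm8, e9_zero, r22] <;> ring_nf

lemma IdB : mB * mB = dB := by
  ext i j
  fin_cases i <;> fin_cases j <;>
    simp [mB, dB, Matrix.mul_apply, Fin.sum_univ_three, Matrix.vecHead, Matrix.vecTail,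
      e9_mul, n11, n5, rm8, e9_zero, r22] <;> ring_nf

lemma I3 : mE * (mA * dA) = mB * dB := by
  ext i j
  fin_cases i <;> fin_cases j <;>
    simp [mE, mA, mB, dA, dB, Matrix.mul_apply, Fin.sum_univ_three, Matrix.vecHead,
      Matrix.vecTail, e9_mul, n11, n5, rm8, e9_zero] <;> ring_nf

lemma I4 : mA * mB * mA = mG := by
  ext i j
  fin_cases i <;> fin_cases j <;>
    simp [mA, mB, mG, Matrix.mul_apply, Fin.sum_univ_three, Matrix.vecHead, Matrix.vecTail,
      e9_mul, n11, n5, rm8, e9_zero, r27] <;> ring_nf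

lemma I5 : mF = dA * (dA * (dA * (dB * dB))) := by
  ext i j
  fin_cases i <;> fin_cases j <;>
    simp [mF, dA, dB, Matrix.diagonal, Matrix.mul_apply, Fin.sum_univ_three, Matrix.vecHead,
      Matrix.vecTail, hf, hg, e9_mul, rm8, e9_zero, r20, r38, r32, r22, r14] <;> ring_nf

/-- The group generated by a and b is isomorphic (as an abstract group) to the
group D(9,1,1;2,1,1) generated by E, F(9,1,1) and G(2,1,1). -/
theorem stmt15 (a b eE fF gG : GL (Fin 3) ℂ)
    (ha : (a : Matrix (Fin 3) (Fin 3) ℂ) = ma)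
    (hb : (b : Matrix (Fin 3) (Fin 3) ℂ) = mb)
    (hE : (eE : Matrix (Fin 3) (Fin 3) ℂ) = mE)
    (hF : (fF : Matrix (Fin 3) (Fin 3) ℂ) = mF)
    (hG : (gG : Matrix (Fin 3) (Fin 3) ℂ) = mG) :
    Nonempty ((Subgroup.closure ({a, b} : Set (GL (Fin 3) ℂ))) ≃*
      (Subgroup.closure ({eE, fF, gG} : Set (GL (Fin 3) ℂ)))) := by
  classical
  let uu : GL (Fin 3) ℂ := ⟨mX, mXi, hXXi, hXiX⟩
  have hu : ((uu : GL (Fin 3) ℂ) : Matrix (Fin 3) (Fin 3) ℂ) = mX := rfl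
  have hui : ((uu⁻¹ : GL (Fin 3) ℂ) : Matrix (Fin 3) (Fin 3) ℂ) = mXi := rfl
  have h1 : uu * a * uu⁻¹ = eE * fF * gG := by
    apply Units.ext
    simp only [Units.val_mul, hu, hui, ha, hE, hF, hG]
    rw [I1, mul_assoc, hXXi, mul_one, I0a]
  have h2 : uu * b * uu⁻¹ = fF * gG * eE := by
    apply Units.ext
    simp only [Units.val_mul, hu, hui, hb, hE, hF, hG]
    rw [I2, mul_assoc, hXXi, mul_one, I0b]
  refine ⟨((MulAut.conj uu).subgroupMap (Subgroup.closure {a, b})).trans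
    (MulEquiv.subgroupCongr ?_)⟩
  rw [MonoidHom.map_closure, Set.image_pair]
  have hca : ((MulAut.conj uu : GL (Fin 3) ℂ ≃* GL (Fin 3) ℂ) : GL (Fin 3) ℂ →* GL (Fin 3) ℂ) a
      = eE * fF * gG := by
    simpa [MulAut.conj_apply] using h1
  have hcb : ((MulAut.conj uu : GL (Fin 3) ℂ ≃* GL (Fin 3) ℂ) : GL (Fin 3) ℂ →* GL (Fin 3) ℂ) b
      = fF * gG * eE := by
    simpa [MulAut.conj_apply] using h2
  rw [hca, hcb]
  -- now prove closure {EFG, FGE} = closure {E, F, G}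
  set A := eE * fF * gG with hA
  set B := fF * gG * eE with hB
  have cA : ((A : GL (Fin 3) ℂ) : Matrix (Fin 3) (Fin 3) ℂ) = mA := by
    simp only [hA, Units.val_mul, hE, hF, hG]; exact I0a
  have cB : ((B : GL (Fin 3) ℂ) : Matrix (Fin 3) (Fin 3) ℂ) = mB := by
    simp only [hB, Units.val_mul, hE, hF, hG]; exact I0b
  have hAmem : A ∈ Subgroup.closure ({A, B} : Set (GL (Fin 3) ℂ)) :=
    Subgroup.subset_closure (by simp)
  have hBmem : B ∈ Subgroup.closure ({A, B} : Set (GL (Fin 3) ℂ)) :=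
    Subgroup.subset_closure (by simp)
  have hEc : eE ∈ Subgroup.closure ({eE, fF, gG} : Set (GL (Fin 3) ℂ)) :=
    Subgroup.subset_closure (by simp)
  have hFc : fF ∈ Subgroup.closure ({eE, fF, gG} : Set (GL (Fin 3) ℂ)) :=
    Subgroup.subset_closure (by simp)
  have hGc : gG ∈ Subgroup.closure ({eE, fF, gG} : Set (GL (Fin 3) ℂ)) :=
    Subgroup.subset_closure (by simp)
  have hee : eE * (A * (A * A)) = B * (B * B) := by
    apply Units.ext
    simp only [Units.val_mul, hE, cA, cB]
    rw [IdA, IdB, I3]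
  have hgg : gG = A * B * A := by
    apply Units.ext
    simp only [Units.val_mul, hG, cA, cB]
    rw [I4]
  have hff : fF = (A * A) * ((A * A) * ((A * A) * ((B * B) * (B * B)))) := by
    apply Units.ext
    simp only [Units.val_mul, hF, cA, cB]
    rw [IdA, IdB]
    exact I5
  apply le_antisymm
  · rw [Subgroup.closure_le]
    intro x hx
    simp only [Set.mem_insert_iff, Set.mem_singleton_iff] at hx
    rcases hx with rfl | rfl
    · exact mul_mem (mul_mem hEc hFc) hGc
    · exact mul_mem (mul_mem hFc hGc) hEc
  · rw [Subgroup.closure_le]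
    intro x hx
    simp only [Set.mem_insert_iff, Set.mem_singleton_iff] at hx
    rcases hx with rfl | rfl | rfl
    · rw [eq_mul_inv_of_mul_eq hee]
      exact mul_mem (mul_mem hBmem (mul_mem hBmem hBmem))
        (inv_mem (mul_mem hAmem (mul_mem hAmem hAmem)))
    · rw [hff]
      exact mul_mem (mul_mem hAmem hAmem)
        (mul_mem (mul_mem hAmem hAmem)
          (mul_mem (mul_mem hAmem hAmem) (mul_mem (mul_mem hBmem hBmem) (mul_mem hBmem hBmem))))
    · rw [hgg]
      exact mul_mem (mul_mem hAmem hBmem) hAmem
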